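/- Let D = D_h + E_h + D_1 + … + D_n + E_1 + … + E_n be the boundary-plus-exceptional configuration of the non-extendable C*-ruling construction, where E_h^2 = −N, the E_i, D_i are adjoint admissible chains of columnar fibers with ẽ(E_i) = ẽ_i. Then d(E_1 + … + E_n + E_h) = d(E_1)⋯d(E_n)·(N − Σ_{i=1}^n ẽ_i), so the intersection matrix of E is negative definite if and only if Σ ẽ_i < N. -/

import Mathlib

/-- `d([a₁,…,aₙ])`: determinant of the negative intersection matrix of a
rational chain, via the recursion `d([a₁,…,aₙ]) = a₁ d([a₂,…,aₙ]) − d([a₃,…,aₙ])`. -/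
def chainDet : List ℤ → ℤ
  | [] => 1
  | [a] => a
  | a :: b :: l => a * chainDet (b :: l) - chainDet l

/-- `ẽ(E) = d(E minus the component meeting the central curve)/d(E)` for a
chain `E` listed starting from the component meeting the central curve. -/
def eTilde (l : List ℤ) : ℚ := (chainDet l.tail : ℚ) / chainDet l

/-- The negative intersection matrix of the configuration
`E = E₁ + … + Eₙ + E_h`, where `E_h` is a curve with `E_h² = −N` meeting the
first component of each chain `Eᵢ` once (the chain `Eᵢ` is recorded by the
list `L i` of the numbers `−C²` of its components). The index `none` stands
for `E_h`. -/
def configMatrix (n : ℕ) (N : ℤ) (L : Fin n → List ℤ) :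
    Matrix (Option ((i : Fin n) × Fin (L i).length))
      (Option ((i : Fin n) × Fin (L i).length)) ℚ :=
  fun x y =>
    match x, y with
    | none, none => (N : ℚ)
    | none, some ⟨_, j⟩ => if (j : ℕ) = 0 then -1 else 0
    | some ⟨_, j⟩, none => if (j : ℕ) = 0 then -1 else 0
    | some ⟨i, j⟩, some ⟨i', j'⟩ =>
      if i = i' then
        (if (j : ℕ) = (j' : ℕ) then ((L i).get j : ℚ)
         else if (j : ℕ) + 1 = (j' : ℕ) ∨ (j' : ℕ) + 1 = (j : ℕ) then -1 else 0)
      else 0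

open Matrix

def chainMatrix (l : List ℤ) : Matrix (Fin l.length) (Fin l.length) ℚ :=
  fun j j' =>
    if (j : ℕ) = (j' : ℕ) then ((l.get j : ℤ) : ℚ)
    else if (j : ℕ) + 1 = (j' : ℕ) ∨ (j' : ℕ) + 1 = (j : ℕ) then -1 else 0

lemma chainMatrix_transpose (l : List ℤ) : (chainMatrix l)ᵀ = chainMatrix l := by
  ext i j
  rcases eq_or_ne (i : ℕ) (j : ℕ) with h | h
  · have : i = j := Fin.ext h
    subst this; rfl
  · simp only [Matrix.transpose_apply, chainMatrix, h, Ne.symm h, if_false, or_comm]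

/-- the value of a vector at index `0`, or `0` if the index type is empty. -/
def head0 {m : ℕ} (v : Fin m → ℚ) : ℚ := if h : 0 < m then v ⟨0, h⟩ else 0

lemma head0_eq {m : ℕ} (v : Fin m → ℚ) (h : 0 < m) : head0 v = v ⟨0, h⟩ := dif_pos h

lemma head0_smul {m : ℕ} (c : ℚ) (v : Fin m → ℚ) :
    head0 (fun j => c * v j) = c * head0 v := by
  unfold head0; split <;> simp

lemma sum_ite_mul {m : ℕ} (c : ℚ) (v : Fin m → ℚ) :
    ∑ j : Fin m, (if (j : ℕ) = 0 then c else 0) * v j = c * head0 v := by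
  cases m with
  | zero => simp [head0]
  | succ m =>
    rw [Fin.sum_univ_succ]
    simp [head0, Fin.val_succ]

lemma sum_mul_ite {m : ℕ} (c : ℚ) (v : Fin m → ℚ) :
    ∑ j : Fin m, v j * (if (j : ℕ) = 0 then c else 0) = head0 v * c := by
  cases m with
  | zero => simp [head0]
  | succ m =>
    rw [Fin.sum_univ_succ]
    simp [head0, Fin.val_succ, mul_comm]

lemma cM_cons_zero_zero (a : ℤ) (l : List ℤ) :
    chainMatrix (a :: l) (0 : Fin (l.length + 1)) (0 : Fin (l.length + 1)) = (a : ℚ) := by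
  simp [chainMatrix]

lemma cM_cons_zero_succ (a : ℤ) (l : List ℤ) (j : Fin l.length) :
    chainMatrix (a :: l) (0 : Fin (l.length + 1)) j.succ = if (j : ℕ) = 0 then -1 else 0 := by
  rcases eq_or_ne (j : ℕ) 0 with h | h <;>
    simp [chainMatrix, Fin.val_succ, h]

lemma cM_cons_succ_zero (a : ℤ) (l : List ℤ) (j : Fin l.length) :
    chainMatrix (a :: l) j.succ (0 : Fin (l.length + 1)) = if (j : ℕ) = 0 then -1 else 0 := by
  rcases eq_or_ne (j : ℕ) 0 with h | h <;>
    simp [chainMatrix, Fin.val_succ, h]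

lemma cM_cons_succ_succ (a : ℤ) (l : List ℤ) (i j : Fin l.length) :
    chainMatrix (a :: l) i.succ j.succ = chainMatrix l i j := by
  simp [chainMatrix, Fin.val_succ]

lemma mulVec_apply' {m : ℕ} (M : Matrix (Fin m) (Fin m) ℚ) (v : Fin m → ℚ) (i : Fin m) :
    M.mulVec v i = ∑ j, M i j * v j := rfl

lemma mulVec_cons_apply (a : ℤ) (l : List ℤ) (v : Fin (l.length + 1) → ℚ)
    (i : Fin (l.length + 1)) :
    (chainMatrix (a :: l)).mulVec v i = ∑ j : Fin (l.length + 1), chainMatrix (a :: l) i j * v j :=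
  rfl

lemma mulVec_cons_zero (a : ℤ) (l : List ℤ) (v : Fin (l.length + 1) → ℚ) :
    (chainMatrix (a :: l)).mulVec v (0 : Fin (l.length + 1)) =
      a * v 0 - head0 (v ∘ Fin.succ) := by
  rw [mulVec_cons_apply]
  rw [Fin.sum_univ_succ, cM_cons_zero_zero]
  simp_rw [cM_cons_zero_succ]
  rw [show (∑ j : Fin l.length, (if (j : ℕ) = 0 then (-1 : ℚ) else 0) * v j.succ)
      = ∑ j : Fin l.length, (if (j : ℕ) = 0 then (-1 : ℚ) else 0) * (v ∘ Fin.succ) j from rfl,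
    sum_ite_mul (-1) (v ∘ Fin.succ)]
  ring

lemma mulVec_cons_succ (a : ℤ) (l : List ℤ) (v : Fin (l.length + 1) → ℚ)
    (i : Fin l.length) :
    (chainMatrix (a :: l)).mulVec v i.succ =
      -(if (i : ℕ) = 0 then v 0 else 0) + (chainMatrix l).mulVec (v ∘ Fin.succ) i := by
  rw [mulVec_cons_apply]
  rw [Fin.sum_univ_succ, cM_cons_succ_zero]
  simp_rw [cM_cons_succ_succ]
  rw [mulVec_apply']
  congr 1
  split <;> ring

/-- quadratic form of a chain -/
def qf (l : List ℤ) (v : Fin l.length → ℚ) : ℚ :=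
  dotProduct v ((chainMatrix l).mulVec v)

lemma qf_cons (a : ℤ) (l : List ℤ) (v : Fin (l.length + 1) → ℚ) :
    qf (a :: l) v =
      a * (v 0) ^ 2 - 2 * v 0 * head0 (v ∘ Fin.succ) + qf l (v ∘ Fin.succ) := by
  show (∑ i : Fin (l.length + 1), v i * ((chainMatrix (a :: l)).mulVec v i)) = _
  rw [Fin.sum_univ_succ, mulVec_cons_zero]
  simp_rw [mulVec_cons_succ, mul_add, Finset.sum_add_distrib]
  have h1 : (∑ i : Fin l.length, v i.succ * -(if (i : ℕ) = 0 then v 0 else 0))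
      = -(head0 (v ∘ Fin.succ) * v 0) := by
    rw [← sum_mul_ite (v 0) (v ∘ Fin.succ)]
    rw [← Finset.sum_neg_distrib]
    exact Finset.sum_congr rfl fun i _ => by
      simp only [Function.comp_apply]; split <;> ring
  rw [h1]
  unfold qf dotProduct
  simp only [Function.comp_apply]
  ring

lemma chainDet_tail_lt (l : List ℤ) (hne : l ≠ []) (h2 : ∀ a ∈ l, 2 ≤ a) :
    0 ≤ chainDet l.tail ∧ chainDet l.tail < chainDet l := by
  induction l with
  | nil => exact absurd rfl hne
  | cons a l ih =>
    have ha : 2 ≤ a := h2 a (List.mem_cons_self)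
    cases l with
    | nil =>
      refine ⟨by norm_num [chainDet], ?_⟩
      show chainDet [] < chainDet [a]
      show (1 : ℤ) < a
      omega
    | cons b m =>
      have ih' := ih (List.cons_ne_nil b m) (fun x hx => h2 x (List.mem_cons_of_mem a hx))
      simp only [List.tail_cons] at ih' ⊢
      have hd : chainDet (a :: b :: m) = a * chainDet (b :: m) - chainDet m := rfl
      constructor
      · omega
      · rw [hd]; nlinarith [ih'.1, ih'.2]

lemma chainDet_pos (l : List ℤ) (h2 : ∀ a ∈ l, 2 ≤ a) : 0 < chainDet l := by
  cases l with
  | nil => norm_num [chainDet]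
  | cons a l =>
    have := chainDet_tail_lt (a :: l) (List.cons_ne_nil a l) h2
    simp only [List.tail_cons] at this
    omega

lemma qf_bounds_cons (a : ℤ) (l : List ℤ) (ha : (2 : ℚ) ≤ (a : ℚ))
    (ih : ∀ u : Fin l.length → ℚ, (head0 u) ^ 2 ≤ qf l u ∧ (u ≠ 0 → 0 < qf l u))
    (v : Fin (l.length + 1) → ℚ) :
    (head0 v) ^ 2 ≤ qf (a :: l) v ∧ (v ≠ 0 → 0 < qf (a :: l) v) := by
  have ih' := ih (v ∘ Fin.succ)
  have hq := qf_cons a l v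
  have hh : head0 v = v 0 := head0_eq v (Nat.succ_pos _)
  have hn : 0 ≤ qf l (v ∘ Fin.succ) := by
    rcases eq_or_ne (v ∘ Fin.succ) 0 with h | h
    · rw [h]; simp [qf, dotProduct]
    · exact le_of_lt (ih'.2 h)
  constructor
  · rw [hq, hh]
    nlinarith [ih'.1, sq_nonneg (v 0 - head0 (v ∘ Fin.succ)), sq_nonneg (v 0)]
  · intro hv
    rcases eq_or_ne (v 0) 0 with h0 | h0
    · have hne : v ∘ Fin.succ ≠ 0 := by
        intro hcomp
        apply hv
        funext i
        refine Fin.cases ?_ ?_ i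
        · exact h0
        · intro j; exact congrFun hcomp j
      have hpos := ih'.2 hne
      rw [hq, h0]
      nlinarith [ih'.1]
    · rw [hq]
      nlinarith [ih'.1, sq_nonneg (v 0 - head0 (v ∘ Fin.succ)), sq_pos_of_ne_zero h0]

lemma qf_bounds (l : List ℤ) (h2 : ∀ a ∈ l, 2 ≤ a) (v : Fin l.length → ℚ) :
    (head0 v) ^ 2 ≤ qf l v ∧ (v ≠ 0 → 0 < qf l v) := by
  induction l with
  | nil =>
    have hv : v = 0 := funext fun i => i.elim0
    constructor
    · simp [head0, qf, dotProduct]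
    · intro h; exact absurd hv h
  | cons a l ih =>
    have ha : (2 : ℚ) ≤ (a : ℚ) := by
      exact_mod_cast h2 a (List.mem_cons_self)
    exact qf_bounds_cons a l ha
      (fun u => ih (fun x hx => h2 x (List.mem_cons_of_mem a hx)) u) v

lemma qf_nonneg (l : List ℤ) (h2 : ∀ a ∈ l, 2 ≤ a) (v : Fin l.length → ℚ) :
    0 ≤ qf l v := by
  rcases eq_or_ne v 0 with h | h
  · rw [h]; simp [qf, dotProduct]
  · exact le_of_lt ((qf_bounds l h2 v).2 h)

/-- the solution of `C w = e₀`. -/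
def wv (l : List ℤ) : Fin l.length → ℚ :=
  fun j => (chainDet (l.drop ((j : ℕ) + 1)) : ℚ) / (chainDet l : ℚ)

lemma wv_zero (l : List ℤ) (h : 0 < l.length) : wv l ⟨0, h⟩ = eTilde l := by
  simp [wv, eTilde, List.drop_one]

lemma head0_wv (l : List ℤ) (h : l ≠ []) : head0 (wv l) = eTilde l := by
  have hl : 0 < l.length := List.length_pos_iff.mpr h
  rw [head0_eq _ hl, wv_zero]

lemma head0_smul' {m : ℕ} (c : ℚ) (v : Fin m → ℚ) : head0 (c • v) = c * head0 v := by
  unfold head0; split <;> simp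

lemma mulVec_wv : ∀ l : List ℤ, l ≠ [] → (∀ a ∈ l, 2 ≤ a) →
    (chainMatrix l).mulVec (wv l) = fun j : Fin l.length => if (j : ℕ) = 0 then (1 : ℚ) else 0 := by
  intro l
  induction l with
  | nil => intro h; exact absurd rfl h
  | cons a l ih =>
    intro _ h2
    have ha : 2 ≤ a := h2 a (List.mem_cons_self)
    have haq : (a : ℚ) ≠ 0 := by
      have : (0 : ℚ) < a := by exact_mod_cast (by omega : (0:ℤ) < a)
      exact this.ne'
    cases l with
    | nil =>
      funext j
      refine Fin.cases ?_ (fun i => i.elim0) j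
      · rw [mulVec_cons_zero]
        have h1 : head0 (wv [a] ∘ Fin.succ) = 0 := by
          simp [head0]
        have h2 : wv [a] (0 : Fin (List.length ([] : List ℤ) + 1)) = 1 / (a : ℚ) := by
          simp [wv, chainDet]
        rw [h1, h2]
        simp
        field_simp
    | cons b m =>
      have h2' : ∀ x ∈ b :: m, 2 ≤ x := fun x hx => h2 x (List.mem_cons_of_mem a hx)
      have hc : (0 : ℤ) < chainDet (b :: m) := chainDet_pos _ h2'
      have hd : (0 : ℤ) < chainDet (a :: b :: m) := chainDet_pos _ h2
      have hcq : ((chainDet (b :: m) : ℤ) : ℚ) ≠ 0 := by exact_mod_cast hc.ne'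
      have hdq : ((chainDet (a :: b :: m) : ℤ) : ℚ) ≠ 0 := by exact_mod_cast hd.ne'
      have hdet : ((chainDet (a :: b :: m) : ℤ) : ℚ)
          = a * chainDet (b :: m) - chainDet m := by
        have : chainDet (a :: b :: m) = a * chainDet (b :: m) - chainDet m := rfl
        rw [this]; push_cast; ring
      have hw0 : wv (a :: b :: m) (0 : Fin ((b :: m).length + 1))
          = (chainDet (b :: m) : ℚ) / (chainDet (a :: b :: m) : ℚ) := by
        simp [wv]
      have hw : wv (a :: b :: m) ∘ Fin.succ
          = ((chainDet (b :: m) : ℚ) / (chainDet (a :: b :: m) : ℚ)) • wv (b :: m) := by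
        funext j
        simp only [Function.comp_apply, Pi.smul_apply, smul_eq_mul, wv, Fin.val_succ]
        rw [show (a :: b :: m).drop ((j : ℕ) + 1 + 1) = (b :: m).drop ((j : ℕ) + 1) from rfl]
        field_simp
      funext i
      refine Fin.cases ?_ ?_ i
      · rw [mulVec_cons_zero, hw0, hw, head0_smul', head0_wv _ (List.cons_ne_nil b m)]
        have he : eTilde (b :: m) = (chainDet m : ℚ) / (chainDet (b :: m) : ℚ) := by
          simp [eTilde]
        rw [he]
        simp only [Fin.val_zero, if_pos rfl]
        rw [show (a : ℚ) * ((chainDet (b :: m) : ℚ) / (chainDet (a :: b :: m) : ℚ))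
            - (chainDet (b :: m) : ℚ) / (chainDet (a :: b :: m) : ℚ)
              * ((chainDet m : ℚ) / (chainDet (b :: m) : ℚ))
            = ((a : ℚ) * (chainDet (b :: m) : ℚ) - (chainDet m : ℚ))
                / (chainDet (a :: b :: m) : ℚ) by field_simp, ← hdet]
        exact div_self hdq
      · intro i'
        rw [mulVec_cons_succ, hw, Matrix.mulVec_smul,
          ih (List.cons_ne_nil b m) h2', hw0]
        simp only [Pi.smul_apply, smul_eq_mul, Fin.val_succ]
        split <;> simp

def finSuccEquivPUnitSum (n : ℕ) : Fin (n + 1) ≃ PUnit.{1} ⊕ Fin n :=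
  (finSuccEquiv n).trans ((Equiv.optionEquivSumPUnit (Fin n)).trans (Equiv.sumComm _ _))

lemma fSE_zero (n : ℕ) : finSuccEquivPUnitSum n 0 = Sum.inl PUnit.unit := by
  simp [finSuccEquivPUnitSum]

lemma fSE_succ (n : ℕ) (i : Fin n) : finSuccEquivPUnitSum n i.succ = Sum.inr i := by
  simp [finSuccEquivPUnitSum]

lemma chainMatrix_cons_eq (a : ℤ) (l : List ℤ) :
    chainMatrix (a :: l) =
      (Matrix.fromBlocks (fun _ _ => (a : ℚ) : Matrix PUnit PUnit ℚ)
        (fun (_ : PUnit) (j : Fin l.length) => if (j : ℕ) = 0 then (-1 : ℚ) else 0)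
        (fun (j : Fin l.length) (_ : PUnit) => if (j : ℕ) = 0 then (-1 : ℚ) else 0)
        (chainMatrix l)).submatrix (finSuccEquivPUnitSum l.length)
          (finSuccEquivPUnitSum l.length) := by
  ext i j
  rw [Matrix.submatrix_apply]
  refine Fin.cases ?_ (fun i' => ?_) i
  · refine Fin.cases ?_ (fun j' => ?_) j
    · rw [fSE_zero, cM_cons_zero_zero]; rfl
    · rw [fSE_zero, fSE_succ, cM_cons_zero_succ]; rfl
  · refine Fin.cases ?_ (fun j' => ?_) j
    · rw [fSE_zero, fSE_succ, cM_cons_succ_zero]; rfl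
    · rw [fSE_succ, fSE_succ, cM_cons_succ_succ]; rfl

lemma chainMatrix_det (l : List ℤ) (h2 : ∀ a ∈ l, 2 ≤ a) :
    (chainMatrix l).det = (chainDet l : ℚ) := by
  induction l with
  | nil => rw [Matrix.det_fin_zero]; norm_num [chainDet]
  | cons a l ih =>
    cases l with
    | nil =>
      rw [Matrix.det_fin_one]
      rw [show chainDet [a] = a from rfl]
      exact cM_cons_zero_zero a []
    | cons b m =>
      have h2' : ∀ x ∈ b :: m, 2 ≤ x := fun x hx => h2 x (List.mem_cons_of_mem a hx)
      have hC := ih h2'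
      have hpos : (0 : ℤ) < chainDet (b :: m) := chainDet_pos _ h2'
      have hCq : ((chainDet (b :: m) : ℤ) : ℚ) ≠ 0 := by exact_mod_cast hpos.ne'
      haveI : Invertible (chainMatrix (b :: m)) :=
        (chainMatrix (b :: m)).invertibleOfIsUnitDet
          (by rw [hC]; exact isUnit_iff_ne_zero.mpr hCq)
      rw [chainMatrix_cons_eq a (b :: m),
        Matrix.det_submatrix_equiv_self (finSuccEquivPUnitSum (b :: m).length)]
      refine (Matrix.det_fromBlocks₂₂ _ _ _ _).trans ?_
      -- compute the Schur complement
      set Bc : Matrix (Fin (b :: m).length) PUnit ℚ :=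
        (fun (j : Fin (b :: m).length) (_ : PUnit) => if (j : ℕ) = 0 then (-1 : ℚ) else 0) with hBc
      set Br : Matrix PUnit (Fin (b :: m).length) ℚ :=
        (fun (_ : PUnit) (j : Fin (b :: m).length) => if (j : ℕ) = 0 then (-1 : ℚ) else 0) with hBr
      set Wc : Matrix (Fin (b :: m).length) PUnit ℚ :=
        (fun j _ => -(wv (b :: m) j)) with hWc
      have hW : chainMatrix (b :: m) * Wc = Bc := by
        ext j u
        rw [Matrix.mul_apply]
        rw [hWc]
        have : ∀ k, chainMatrix (b :: m) j k * (-(wv (b :: m) k))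
            = -(chainMatrix (b :: m) j k * wv (b :: m) k) := fun k => by ring
        simp_rw [this]
        rw [Finset.sum_neg_distrib]
        have := congrFun (mulVec_wv (b :: m) (List.cons_ne_nil b m) h2') j
        rw [show (∑ k, chainMatrix (b :: m) j k * wv (b :: m) k)
            = (chainMatrix (b :: m)).mulVec (wv (b :: m)) j from rfl, this]
        simp only [hBc]
        by_cases hj : (j : ℕ) = 0 <;> simp [hj]
      have hinv : ⅟(chainMatrix (b :: m)) * Bc = Wc := by
        rw [← hW, ← Matrix.mul_assoc, invOf_mul_self, Matrix.one_mul]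
      rw [Matrix.mul_assoc, hinv]
      have hBW : Br * Wc = fun (_ _ : PUnit) => eTilde (b :: m) := by
        ext u u'
        rw [Matrix.mul_apply, hBr, hWc]
        have : ∀ k : Fin (b :: m).length,
            (if (k : ℕ) = 0 then (-1 : ℚ) else 0) * (-(wv (b :: m) k))
            = (if (k : ℕ) = 0 then (1 : ℚ) else 0) * wv (b :: m) k := fun k => by
          split <;> ring
        simp_rw [this]
        rw [sum_ite_mul 1 (wv (b :: m)), one_mul, head0_wv _ (List.cons_ne_nil b m)]
      rw [hBW, hC, Matrix.det_unique]
      have he : eTilde (b :: m) = (chainDet m : ℚ) / (chainDet (b :: m) : ℚ) := by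
        simp [eTilde]
      have hdet : ((chainDet (a :: b :: m) : ℤ) : ℚ)
          = a * chainDet (b :: m) - chainDet m := by
        rw [show chainDet (a :: b :: m) = a * chainDet (b :: m) - chainDet m from rfl]
        push_cast; ring
      change _ * ((a : ℚ) - eTilde (b :: m)) = _
      rw [he]
      rw [hdet]
      field_simp

def sigmaFiberEquiv' {n : ℕ} (m : Fin n → ℕ) (k : Fin n) :
    Fin (m k) ≃ {s : (i : Fin n) × Fin (m i) // s.1 = k} where
  toFun j := ⟨⟨k, j⟩, rfl⟩
  invFun s := s.2 ▸ s.1.2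
  left_inv j := rfl
  right_inv s := by rcases s with ⟨⟨i, j⟩, h⟩; subst h; rfl

lemma det_blockDiagonal'' {n : ℕ} {m : Fin n → ℕ} (hm : ∀ i, 0 < m i)
    (M : ∀ i, Matrix (Fin (m i)) (Fin (m i)) ℚ) :
    (Matrix.blockDiagonal' M).det = ∏ i, (M i).det := by
  have hbt : (Matrix.blockDiagonal' M).BlockTriangular Sigma.fst := by
    intro s t h
    rcases s with ⟨i, j⟩; rcases t with ⟨i', j'⟩
    exact Matrix.blockDiagonal'_apply_ne M _ _ (ne_of_gt h)
  rw [hbt.det]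
  have himg : (Finset.univ.image (Sigma.fst : ((i : Fin n) × Fin (m i)) → Fin n))
      = Finset.univ := by
    apply Finset.eq_univ_of_forall
    intro k
    exact Finset.mem_image.mpr ⟨⟨k, ⟨0, hm k⟩⟩, Finset.mem_univ _, rfl⟩
  rw [himg]
  refine Finset.prod_congr rfl fun k _ => ?_
  rw [← Matrix.det_submatrix_equiv_self (sigmaFiberEquiv' m k)]
  congr 1
  ext j j'
  rw [Matrix.submatrix_apply]
  show Matrix.blockDiagonal' M ⟨k, j⟩ ⟨k, j'⟩ = M k j j'
  exact Matrix.blockDiagonal'_apply_eq M k j j'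

lemma qf_sub_smul (l : List ℤ) (hne : l ≠ []) (h2 : ∀ a ∈ l, 2 ≤ a)
    (u : Fin l.length → ℚ) (c : ℚ) :
    qf l (u - c • wv l) = qf l u - 2 * c * head0 u + c ^ 2 * eTilde l := by
  have hind : (chainMatrix l).mulVec (wv l)
      = fun j : Fin l.length => if (j : ℕ) = 0 then (1 : ℚ) else 0 := mulVec_wv l hne h2
  have hu : dotProduct u ((chainMatrix l).mulVec (wv l)) = head0 u := by
    rw [hind]
    show (∑ j, u j * if (j : ℕ) = 0 then (1 : ℚ) else 0) = head0 u
    rw [sum_mul_ite 1 u, mul_one]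
  have hw : dotProduct (wv l) ((chainMatrix l).mulVec (wv l)) = eTilde l := by
    rw [hind]
    show (∑ j, wv l j * if (j : ℕ) = 0 then (1 : ℚ) else 0) = eTilde l
    rw [sum_mul_ite 1 (wv l), mul_one, head0_wv l hne]
  have hsym : dotProduct (wv l) ((chainMatrix l).mulVec u)
      = dotProduct u ((chainMatrix l).mulVec (wv l)) := by
    rw [Matrix.dotProduct_mulVec (wv l)]
    conv_lhs => rw [← chainMatrix_transpose l]
    rw [Matrix.vecMul_transpose, dotProduct_comm]
  unfold qf
  rw [Matrix.mulVec_sub, Matrix.mulVec_smul]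
  simp only [sub_dotProduct, dotProduct_sub, smul_dotProduct,
    dotProduct_smul, smul_eq_mul, hsym, hu, hw]
  ring

variable {n : ℕ} {N : ℤ} {L : Fin n → List ℤ}

lemma config_some_some_eq (i : Fin n) (j j' : Fin (L i).length) :
    configMatrix n N L (some ⟨i, j⟩) (some ⟨i, j'⟩) = chainMatrix (L i) j j' := by
  simp [configMatrix, chainMatrix]

lemma config_some_some_ne {i i' : Fin n} (h : i ≠ i') (j : Fin (L i).length)
    (j' : Fin (L i').length) :
    configMatrix n N L (some ⟨i, j⟩) (some ⟨i', j'⟩) = 0 := by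
  simp [configMatrix, h]

def optEquiv (α : Type) : Option α ≃ PUnit.{1} ⊕ α :=
  (Equiv.optionEquivSumPUnit α).trans (Equiv.sumComm _ _)

lemma optEquiv_none (α : Type) : optEquiv α none = Sum.inl PUnit.unit := by
  simp [optEquiv]

lemma optEquiv_some (α : Type) (a : α) : optEquiv α (some a) = Sum.inr a := by
  simp [optEquiv]

lemma config_eq_blocks (n : ℕ) (N : ℤ) (L : Fin n → List ℤ) :
    configMatrix n N L =
      (Matrix.fromBlocks (fun _ _ => (N : ℚ) : Matrix PUnit PUnit ℚ)
        (fun (_ : PUnit) (s : (i : Fin n) × Fin (L i).length) =>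
          if (s.2 : ℕ) = 0 then (-1 : ℚ) else 0)
        (fun (s : (i : Fin n) × Fin (L i).length) (_ : PUnit) =>
          if (s.2 : ℕ) = 0 then (-1 : ℚ) else 0)
        (Matrix.blockDiagonal' (fun i => chainMatrix (L i)))).submatrix
          (optEquiv _) (optEquiv _) := by
  ext x y
  rw [Matrix.submatrix_apply]
  rcases x with _ | ⟨i, j⟩ <;> rcases y with _ | ⟨i', j'⟩
  · rw [optEquiv_none]; rfl
  · rw [optEquiv_none, optEquiv_some]; rfl
  · rw [optEquiv_none, optEquiv_some]; rfl
  · rw [optEquiv_some, optEquiv_some]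
    show configMatrix n N L (some ⟨i, j⟩) (some ⟨i', j'⟩)
      = Matrix.blockDiagonal' (fun i => chainMatrix (L i)) ⟨i, j⟩ ⟨i', j'⟩
    by_cases h : i = i'
    · subst h
      rw [Matrix.blockDiagonal'_apply_eq, config_some_some_eq]
    · rw [Matrix.blockDiagonal'_apply_ne _ _ _ h, config_some_some_ne h]

lemma config_det (n : ℕ) (N : ℤ) (L : Fin n → List ℤ)
    (hne : ∀ i, L i ≠ []) (hadm : ∀ i, ∀ a ∈ L i, 2 ≤ a) :
    (configMatrix n N L).det =
      (∏ i, (chainDet (L i) : ℚ)) * ((N : ℚ) - ∑ i, eTilde (L i)) := by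
  classical
  set A := Matrix.blockDiagonal' (fun i => chainMatrix (L i)) with hA
  have hlen : ∀ i, 0 < (L i).length := fun i => List.length_pos_iff.mpr (hne i)
  have hAdet : A.det = ∏ i, (chainDet (L i) : ℚ) := by
    rw [hA, det_blockDiagonal'' hlen]
    exact Finset.prod_congr rfl fun i _ => chainMatrix_det _ (hadm i)
  haveI : Invertible A := A.invertibleOfIsUnitDet (by
    rw [hAdet]
    refine isUnit_iff_ne_zero.mpr (Finset.prod_ne_zero_iff.mpr fun i _ => ?_)
    exact_mod_cast (chainDet_pos _ (hadm i)).ne')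
  rw [config_eq_blocks n N L,
    Matrix.det_submatrix_equiv_self (optEquiv _)]
  refine (Matrix.det_fromBlocks₂₂ _ _ _ _).trans ?_
  set Wc : Matrix ((i : Fin n) × Fin (L i).length) PUnit ℚ :=
    (fun s _ => -(wv (L s.1) s.2)) with hWc
  set Bc : Matrix ((i : Fin n) × Fin (L i).length) PUnit ℚ :=
    (fun s _ => if (s.2 : ℕ) = 0 then (-1 : ℚ) else 0) with hBc
  set Br : Matrix PUnit ((i : Fin n) × Fin (L i).length) ℚ :=
    (fun _ s => if (s.2 : ℕ) = 0 then (-1 : ℚ) else 0) with hBr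
  have hW : A * Wc = Bc := by
    ext ⟨i, j⟩ u
    rw [Matrix.mul_apply, ← Finset.univ_sigma_univ, Finset.sum_sigma]
    rw [Finset.sum_eq_single i]
    · have : ∀ j' : Fin (L i).length,
          A ⟨i, j⟩ ⟨i, j'⟩ * Wc ⟨i, j'⟩ u
            = -(chainMatrix (L i) j j' * wv (L i) j') := by
        intro j'
        rw [hA, Matrix.blockDiagonal'_apply_eq, hWc]
        ring
      simp_rw [this]
      rw [Finset.sum_neg_distrib]
      have h2 := congrFun (mulVec_wv (L i) (hne i) (hadm i)) j
      rw [show (∑ j' : Fin (L i).length, chainMatrix (L i) j j' * wv (L i) j')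
          = (chainMatrix (L i)).mulVec (wv (L i)) j from rfl, h2]
      simp only [hBc]
      by_cases hj : (j : ℕ) = 0 <;> simp [hj]
    · intro i' _ hne'
      refine Finset.sum_eq_zero fun j' _ => ?_
      rw [hA, Matrix.blockDiagonal'_apply_ne _ _ _ (Ne.symm hne'), zero_mul]
    · intro h; exact absurd (Finset.mem_univ i) h
  have hinv : ⅟A * Bc = Wc := by
    rw [← hW, ← Matrix.mul_assoc, invOf_mul_self, Matrix.one_mul]
  rw [Matrix.mul_assoc, hinv]
  have hBW : Br * Wc = fun (_ _ : PUnit) => ∑ i, eTilde (L i) := by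
    ext u u'
    rw [Matrix.mul_apply, ← Finset.univ_sigma_univ, Finset.sum_sigma]
    refine Finset.sum_congr rfl fun i _ => ?_
    have : ∀ j : Fin (L i).length,
        Br u ⟨i, j⟩ * Wc ⟨i, j⟩ u'
          = (if (j : ℕ) = 0 then (1 : ℚ) else 0) * wv (L i) j := by
      intro j
      rw [hBr, hWc]
      by_cases hj : (j : ℕ) = 0 <;> simp [hj]
    simp_rw [this]
    rw [sum_ite_mul 1 (wv (L i)), one_mul, head0_wv _ (hne i)]
  rw [hBW, hAdet, Matrix.det_unique]
  rfl


lemma config_qf (n : ℕ) (N : ℤ) (L : Fin n → List ℤ)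
    (hne : ∀ i, L i ≠ []) (hadm : ∀ i, ∀ a ∈ L i, 2 ≤ a)
    (v : Option ((i : Fin n) × Fin (L i).length) → ℚ) :
    dotProduct v ((configMatrix n N L).mulVec v)
      = (∑ i, qf (L i) ((fun j => v (some ⟨i, j⟩)) - v none • wv (L i)))
        + ((N : ℚ) - ∑ i, eTilde (L i)) * (v none) ^ 2 := by
  classical
  set c := v none with hc
  set u : ∀ i, Fin (L i).length → ℚ := fun i j => v (some ⟨i, j⟩) with hu
  have hmv_some : ∀ (i : Fin n) (j : Fin (L i).length),
      (configMatrix n N L).mulVec v (some ⟨i, j⟩)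
        = (if (j : ℕ) = 0 then (-1 : ℚ) else 0) * c
          + (chainMatrix (L i)).mulVec (u i) j := by
    intro i j
    show (∑ y, configMatrix n N L (some ⟨i, j⟩) y * v y) = _
    rw [Fintype.sum_option, ← Finset.univ_sigma_univ, Finset.sum_sigma]
    congr 1
    rw [Finset.sum_eq_single i]
    · exact Finset.sum_congr rfl fun j' _ => by rw [config_some_some_eq]
    · intro i' _ hne'
      exact Finset.sum_eq_zero fun j' _ => by
        rw [config_some_some_ne (Ne.symm hne'), zero_mul]
    · intro h; exact absurd (Finset.mem_univ i) h
  have hmv_none : (configMatrix n N L).mulVec v none = N * c - ∑ i, head0 (u i) := by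
    show (∑ y, configMatrix n N L none y * v y) = _
    rw [Fintype.sum_option, ← Finset.univ_sigma_univ, Finset.sum_sigma]
    have h2 : ∀ i : Fin n,
        (∑ j : Fin (L i).length,
          configMatrix n N L none (some ⟨i, j⟩) * v (some ⟨i, j⟩)) = -(head0 (u i)) := by
      intro i
      have he : ∀ j : Fin (L i).length,
          configMatrix n N L none (some ⟨i, j⟩) * v (some ⟨i, j⟩)
            = (if (j : ℕ) = 0 then (-1 : ℚ) else 0) * u i j := fun j => rfl
      simp_rw [he]
      rw [sum_ite_mul (-1) (u i)]; ring
    rw [Finset.sum_congr rfl (fun i _ => h2 i), Finset.sum_neg_distrib]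
    have h1 : configMatrix n N L none none * v none = N * c := rfl
    rw [h1]
    ring
  have h3 : ∀ i : Fin n,
      (∑ j : Fin (L i).length, v (some ⟨i, j⟩) * (configMatrix n N L).mulVec v (some ⟨i, j⟩))
        = -(head0 (u i) * c) + qf (L i) (u i) := by
    intro i
    simp_rw [hmv_some i]
    have hr : ∀ j : Fin (L i).length,
        v (some ⟨i, j⟩) * ((if (j : ℕ) = 0 then (-1 : ℚ) else 0) * c
            + (chainMatrix (L i)).mulVec (u i) j)
          = (u i j * (if (j : ℕ) = 0 then (-1 : ℚ) else 0)) * c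
            + u i j * (chainMatrix (L i)).mulVec (u i) j := fun j => by
      rw [hu]; ring
    simp_rw [hr]
    rw [Finset.sum_add_distrib, ← Finset.sum_mul, sum_mul_ite (-1) (u i)]
    have hq : (∑ j, u i j * (chainMatrix (L i)).mulVec (u i) j) = qf (L i) (u i) := rfl
    rw [hq]; ring
  have h4 : ∀ i : Fin n, qf (L i) (u i - c • wv (L i))
      = qf (L i) (u i) - 2 * c * head0 (u i) + c ^ 2 * eTilde (L i) :=
    fun i => qf_sub_smul (L i) (hne i) (hadm i) (u i) c
  show (∑ y, v y * (configMatrix n N L).mulVec v y) = _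
  rw [Fintype.sum_option, hmv_none, ← Finset.univ_sigma_univ, Finset.sum_sigma,
    Finset.sum_congr rfl (fun i _ => h3 i)]
  rw [Finset.sum_congr rfl (fun (i : Fin n) (_ : i ∈ Finset.univ) => h4 i)]
  rw [Finset.sum_add_distrib, Finset.sum_add_distrib, Finset.sum_sub_distrib,
    Finset.sum_neg_distrib, ← Finset.sum_mul, ← Finset.mul_sum, ← Finset.mul_sum]
  ring

/-- (From the proof of Theorem 4.4; cf. Koras–Russell 2.1.1) For the
configuration `E = E₁ + … + Eₙ + E_h` of the non-extendable `C*`-ruling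
construction, with each `Eᵢ` an admissible chain:
`d(E₁ + … + Eₙ + E_h) = d(E₁)⋯d(Eₙ)·(N − Σᵢ ẽ(Eᵢ))`, and consequently the
intersection matrix of `E` is negative definite (i.e. its negative is
positive definite) if and only if `Σᵢ ẽ(Eᵢ) < N`. -/
theorem config_det_and_negdef (n : ℕ) (N : ℤ) (L : Fin n → List ℤ)
    (hne : ∀ i, L i ≠ []) (hadm : ∀ i, ∀ a ∈ L i, 2 ≤ a) :
    (configMatrix n N L).det =
      (∏ i, (chainDet (L i) : ℚ)) * ((N : ℚ) - ∑ i, eTilde (L i)) ∧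
    ((∀ v : Option ((i : Fin n) × Fin (L i).length) → ℚ, v ≠ 0 →
        0 < dotProduct v ((configMatrix n N L).mulVec v)) ↔
      ∑ i, eTilde (L i) < (N : ℚ)) := by
  refine ⟨config_det n N L hne hadm, ?_, ?_⟩
  · intro hpd
    set v : Option ((i : Fin n) × Fin (L i).length) → ℚ :=
      fun x => Option.rec 1 (fun s => wv (L s.1) s.2) x with hv
    have hvnone : v none = 1 := rfl
    have hvne : v ≠ 0 := by
      intro h
      have := congrFun h none
      rw [hvnone] at this
      exact one_ne_zero this
    have hQ := hpd v hvne
    rw [config_qf n N L hne hadm v] at hQ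
    have hz : ∀ i ∈ Finset.univ,
        qf (L i) ((fun j => v (some ⟨i, j⟩)) - v none • wv (L i)) = 0 := by
      intro i _
      have h0 : ((fun j => v (some ⟨i, j⟩)) - v none • wv (L i))
          = (0 : Fin (L i).length → ℚ) := by
        funext j
        simp [hv]
      rw [h0]
      simp [qf]
    rw [Finset.sum_eq_zero hz, hvnone] at hQ
    nlinarith [hQ]
  · intro hS v hv
    rw [config_qf n N L hne hadm v]
    rcases eq_or_ne (v none) 0 with h0 | h0
    · obtain ⟨x, hx⟩ := Function.ne_iff.mp hv
      rcases x with _ | ⟨i0, j0⟩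
      · exact absurd h0 hx
      · have hunz : ((fun j => v (some ⟨i0, j⟩)) - v none • wv (L i0)) ≠ 0 := by
          intro hzz
          apply hx
          have := congrFun hzz j0
          rw [Pi.sub_apply, Pi.smul_apply, h0] at this
          simpa using this
        have hpos := (qf_bounds (L i0) (hadm i0) _).2 hunz
        have hnonneg : ∀ i ∈ Finset.univ,
            0 ≤ qf (L i) ((fun j => v (some ⟨i, j⟩)) - v none • wv (L i)) :=
          fun i _ => qf_nonneg (L i) (hadm i) _
        have hsum : 0 < ∑ i, qf (L i) ((fun j => v (some ⟨i, j⟩)) - v none • wv (L i)) :=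
          Finset.sum_pos' hnonneg ⟨i0, Finset.mem_univ _, hpos⟩
        have hzero : ((N : ℚ) - ∑ i, eTilde (L i)) * (v none) ^ 2 = 0 := by
          rw [h0]; ring
        linarith [hsum, hzero]
    · have hsum : 0 ≤ ∑ i, qf (L i) ((fun j => v (some ⟨i, j⟩)) - v none • wv (L i)) :=
        Finset.sum_nonneg fun i _ => qf_nonneg (L i) (hadm i) _
      have h2 : 0 < ((N : ℚ) - ∑ i, eTilde (L i)) * (v none) ^ 2 :=
        mul_pos (by linarith) (sq_pos_of_ne_zero h0)
      linarith
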